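/- Let n, p, q ∈ ℕ, let θᴾ be an n×p real matrix, θᴺ an n×q real matrix, and let zᴾ : ℝⁿ → ℝᵖ and zᴺ : ℝⁿ → ℝ^q be continuous. Let x : ℝ → ℝⁿ be continuously differentiable with x'(t) = θᴾ · zᴾ(x(t)) + θᴺ · zᴺ(x(t)) for all t ≥ t₀. Let h : ℝⁿ → ℝ be continuously differentiable and let α₁ be an extended class K function. If h(x(t₀)) ≥ 0 and for every t ≥ t₀ one has ⟨∇h(x(t)), θᴾ · zᴾ(x(t)) + θᴺ · zᴺ(x(t))⟩ + α₁(h(x(t))) ≥ 0, then h(x(t)) ≥ 0 for all t ≥ t₀ (the neural ODE is forward invariant with respect to the output specification h ≥ 0). -/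

import Mathlib

/-- Invariance propagation to linear layers (Theorem 2): along a trajectory of the
neural ODE `ẋ = θᴾ zᴾ(x) + θᴺ zᴺ(x)`, if the constraint
`⟨∇h(x), θᴾ zᴾ(x) + θᴺ zᴺ(x)⟩ + α₁(h(x)) ≥ 0` holds for all `t ≥ t₀` and
`h(x(t₀)) ≥ 0`, then `h(x(t)) ≥ 0` for all `t ≥ t₀`. -/
theorem invariance_propagation_linear_layer
    (n p q : ℕ) (t₀ : ℝ)
    (θP : Matrix (Fin n) (Fin p) ℝ) (θN : Matrix (Fin n) (Fin q) ℝ)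
    (zP : (Fin n → ℝ) → Fin p → ℝ) (zN : (Fin n → ℝ) → Fin q → ℝ)
    (hzP : Continuous zP) (hzN : Continuous zN)
    (x : ℝ → Fin n → ℝ) (hx : ContDiff ℝ 1 x)
    (hode : ∀ t, t₀ ≤ t →
      HasDerivAt x (θP.mulVec (zP (x t)) + θN.mulVec (zN (x t))) t)
    (h : (Fin n → ℝ) → ℝ) (hh : ContDiff ℝ 1 h)
    (α₁ : ℝ → ℝ) (hα_lip : LocallyLipschitz α₁) (hα_mono : StrictMono α₁)
    (hα0 : α₁ 0 = 0)
    (h0 : 0 ≤ h (x t₀))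
    (hineq : ∀ t, t₀ ≤ t →
      0 ≤ fderiv ℝ h (x t) (θP.mulVec (zP (x t)) + θN.mulVec (zN (x t)))
            + α₁ (h (x t))) :
    ∀ t, t₀ ≤ t → 0 ≤ h (x t) := by
  set y : ℝ → ℝ := fun t => h (x t) with hy
  have hycont : Continuous y := hh.continuous.comp hx.continuous
  have hyderiv : ∀ t, t₀ ≤ t → HasDerivAt y
      (fderiv ℝ h (x t) (θP.mulVec (zP (x t)) + θN.mulVec (zN (x t)))) t := by
    intro t ht
    exact ((hh.differentiable one_ne_zero (x t)).hasFDerivAt).comp_hasDerivAt t (hode t ht)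
  intro t₁ ht₁
  by_contra hneg
  push_neg at hneg
  -- set of times in [t₀, t₁] where y ≥ 0
  set S : Set ℝ := {t | t ∈ Set.Icc t₀ t₁ ∧ 0 ≤ y t} with hS
  have hSne : S.Nonempty := ⟨t₀, ⟨le_rfl, ht₁⟩, h0⟩
  have hSclosed : IsClosed S := by
    have : S = Set.Icc t₀ t₁ ∩ y ⁻¹' Set.Ici 0 := by
      ext t; simp [hS, Set.mem_Icc, and_assoc]
    rw [this]
    exact isClosed_Icc.inter (isClosed_Ici.preimage hycont)
  have hScompact : IsCompact S := (isCompact_Icc).of_isClosed_subset hSclosed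
    (fun t ht => ht.1)
  obtain ⟨hsS, hsub⟩ : sSup S ∈ S ∧ ∀ t ∈ S, t ≤ sSup S :=
    ⟨hScompact.sSup_mem hSne, fun t ht => le_csSup hScompact.bddAbove ht⟩
  set s := sSup S with hsdef
  have hst₀ : t₀ ≤ s := hsS.1.1
  have hst₁ : s ≤ t₁ := hsS.1.2
  have hys : 0 ≤ y s := hsS.2
  have hslt : s < t₁ := by
    rcases lt_or_eq_of_le hst₁ with h' | h'
    · exact h'
    · rw [h'] at hys; linarith
  -- On (s, t₁], y < 0
  have hyneg : ∀ t, s < t → t ≤ t₁ → y t < 0 := by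
    intro t hst htl
    by_contra hge
    push_neg at hge
    exact absurd (hsub t ⟨⟨hst₀.trans hst.le, htl⟩, hge⟩) (not_le.mpr hst)
  -- y is strictly monotone on [s, t₁] since its derivative is positive on (s, t₁)
  have hmono : StrictMonoOn y (Set.Icc s t₁) := by
    apply strictMonoOn_of_deriv_pos (convex_Icc s t₁) hycont.continuousOn
    intro t ht
    rw [interior_Icc] at ht
    have ht₀ : t₀ ≤ t := hst₀.trans ht.1.le
    have hneg' : y t < 0 := hyneg t ht.1 ht.2.le
    have hαneg : α₁ (y t) < 0 := hα0 ▸ hα_mono hneg'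
    have := hineq t ht₀
    rw [(hyderiv t ht₀).deriv]
    linarith
  linarith [hmono ⟨le_rfl, hst₁⟩ ⟨hst₁, le_rfl⟩ hslt, hneg]
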